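/- arXiv:1101.2865 — 3 statements merged into one kernel-verified Lean document; each statement's English description precedes it below -/
import Mathlib

section
/- Let N ⊆ M be von Neumann algebras and E : M → N a conditional expectation (unital positive N-bimodule projection) satisfying the Pimsner–Popa inequality E(x) ≥ λ x for all positive x ∈ M with a constant λ > 0. Then Z := E_n(1), where E = E_n + E_s is the decomposition into normal and singular parts, satisfies λ·1 ≤ Z ≤ 1; in particular Z is invertible with ‖Z^{-1}‖ ≤ λ^{-1}. -/
variable {H : Type*} [NormedAddCommGroup H] [InnerProductSpace ℂ H] [CompleteSpace H]

/-- A map `Φ` is *normal* on a von Neumann algebra `M` if it preserves suprema of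
bounded increasing nets of positive elements of `M`. -/
def IsNormalOn (M : Set (H →L[ℂ] H)) (Φ : (H →L[ℂ] H) →ₗ[ℂ] (H →L[ℂ] H)) : Prop :=
  ∀ (ι : Type) [Preorder ι] [IsDirected ι (· ≤ ·)] [Nonempty ι] (f : ι → (H →L[ℂ] H)),
    (∀ i, f i ∈ M) → (∀ i, 0 ≤ f i) → Monotone f →
      ∀ x ∈ M, IsLUB (Set.range f) x → IsLUB ((fun y => Φ y) '' Set.range f) (Φ x)

/-- A positive map `Φ` is *singular* on `M` if every nonzero orthogonal projection in `M`
dominates a nonzero subprojection in `M` annihilated by `Φ`. -/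
def IsSingularOn (M : Set (H →L[ℂ] H)) (Φ : (H →L[ℂ] H) →ₗ[ℂ] (H →L[ℂ] H)) : Prop :=
  ∀ p ∈ M, IsSelfAdjoint p → IsIdempotentElem p → p ≠ 0 →
    ∃ q ∈ M, IsSelfAdjoint q ∧ IsIdempotentElem q ∧ q ≠ 0 ∧ q ≤ p ∧ Φ q = 0

/-- `E` is a conditional expectation from the von Neumann algebra `M` onto the
subalgebra `N`: a unital positive `N`-bimodule projection. -/
structure IsCondExpOn (M N : VonNeumannAlgebra H)
    (E : (H →L[ℂ] H) →ₗ[ℂ] (H →L[ℂ] H)) : Prop where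
  range_mem : ∀ x ∈ M, E x ∈ N
  unital : E 1 = 1
  pos : ∀ x ∈ M, 0 ≤ x → 0 ≤ E x
  fix : ∀ x ∈ N, E x = x
  bimod : ∀ a ∈ N, ∀ b ∈ N, ∀ x ∈ M, E (a * x * b) = a * E x * b




set_option linter.unusedSectionVars false
set_option linter.unusedVariables false
set_option maxHeartbeats 1000000

open ContinuousLinearMap

local notation "⟪" x ", " y "⟫" => @inner ℂ _ _ x y


lemma pp_mul_apply (e f : H →L[ℂ] H) (ξ : H) : (e * f) ξ = e (f ξ) := rfl

lemma pp_inner_proj {e : H →L[ℂ] H} (hsa : IsSelfAdjoint e) (hid : IsIdempotentElem e)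
    (ξ : H) : ⟪e ξ, ξ⟫ = ((‖e ξ‖ : ℂ)) ^ 2 := by
  have h1 : e (e ξ) = e ξ := by conv_rhs => rw [← hid.eq, pp_mul_apply]
  have h2 := ContinuousLinearMap.adjoint_inner_left e ξ (e ξ)
  rw [hsa.adjoint_eq] at h2
  calc ⟪e ξ, ξ⟫ = ⟪e (e ξ), ξ⟫ := by rw [h1]
    _ = ⟪e ξ, e ξ⟫ := h2
    _ = ((‖e ξ‖ : ℂ)) ^ 2 := inner_self_eq_norm_sq_to_K _

lemma pp_re_inner_proj {e : H →L[ℂ] H} (hsa : IsSelfAdjoint e) (hid : IsIdempotentElem e)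
    (ξ : H) : RCLike.re ⟪e ξ, ξ⟫ = ‖e ξ‖ ^ 2 := by
  rw [pp_inner_proj hsa hid, ← Complex.ofReal_pow]
  exact Complex.ofReal_re _

lemma pp_proj_nonneg {e : H →L[ℂ] H} (hsa : IsSelfAdjoint e) (hid : IsIdempotentElem e) :
    (0 : H →L[ℂ] H) ≤ e := by
  rw [ContinuousLinearMap.nonneg_iff_isPositive]
  refine ⟨hsa.isSymmetric, fun ξ => ?_⟩
  have := pp_re_inner_proj hsa hid ξ
  simp only [ContinuousLinearMap.reApplyInnerSelf]
  rw [this]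
  positivity

lemma pp_proj_le_one {e : H →L[ℂ] H} (hsa : IsSelfAdjoint e) (hid : IsIdempotentElem e) :
    e ≤ 1 := by
  rw [ContinuousLinearMap.le_def]
  have hsa' : IsSelfAdjoint ((1 : H →L[ℂ] H) - e) := (IsSelfAdjoint.one _).sub hsa
  have := pp_proj_nonneg hsa' hid.one_sub
  rwa [ContinuousLinearMap.nonneg_iff_isPositive] at this

lemma pp_proj_norm_le {e : H →L[ℂ] H} (hsa : IsSelfAdjoint e) (hid : IsIdempotentElem e)
    (ξ : H) : ‖e ξ‖ ≤ ‖ξ‖ := by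
  have h := pp_re_inner_proj hsa hid ξ
  have h2 : RCLike.re ⟪e ξ, ξ⟫ ≤ ‖⟪e ξ, ξ⟫‖ := RCLike.re_le_norm _
  have h3 : ‖⟪e ξ, ξ⟫‖ ≤ ‖e ξ‖ * ‖ξ‖ := norm_inner_le_norm _ _
  by_cases h0 : ‖e ξ‖ = 0
  · rw [h0]; positivity
  · have hp : 0 < ‖e ξ‖ := (norm_nonneg _).lt_of_ne (Ne.symm h0)
    have h4 : ‖e ξ‖ * ‖e ξ‖ ≤ ‖e ξ‖ * ‖ξ‖ := by nlinarith [h.symm.le.trans (h2.trans h3)]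
    exact le_of_mul_le_mul_left h4 hp

/-- If `e ≤ f` for projections, then `f * e = e`. -/
lemma pp_proj_le_proj {e f : H →L[ℂ] H} (hesa : IsSelfAdjoint e) (heid : IsIdempotentElem e)
    (hfsa : IsSelfAdjoint f) (hfid : IsIdempotentElem f) (h : e ≤ f) : f * e = e := by
  ext ξ
  rw [pp_mul_apply]
  set η := e ξ with hη
  have heη : e η = η := by rw [hη]; conv_rhs => rw [← heid.eq, pp_mul_apply]
  have hpos := ((ContinuousLinearMap.le_def e f).mp h).2 η
  simp only [ContinuousLinearMap.reApplyInnerSelf, ContinuousLinearMap.sub_apply] at hpos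
  rw [inner_sub_left, map_sub] at hpos
  have he' : RCLike.re ⟪e η, η⟫ = ‖η‖ ^ 2 := by
    rw [pp_re_inner_proj hesa heid, heη]
  have hf' : RCLike.re ⟪f η, η⟫ = ‖f η‖ ^ 2 := pp_re_inner_proj hfsa hfid η
  have hge : ‖η‖ ^ 2 ≤ ‖f η‖ ^ 2 := by rw [← he', ← hf']; linarith
  have hns : ‖f η - η‖ ^ 2 = ‖f η‖ ^ 2 - 2 * RCLike.re ⟪f η, η⟫ + ‖η‖ ^ 2 :=
    @norm_sub_sq ℂ _ _ _ _ (f η) η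
  rw [hf'] at hns
  have : ‖f η - η‖ ^ 2 ≤ 0 := by nlinarith
  have : f η - η = 0 := by
    have := le_antisymm this (by positivity)
    exact norm_eq_zero.mp (by nlinarith [norm_nonneg (f η - η)])
  have := sub_eq_zero.mp this
  simpa [hη] using this

lemma pp_heF_sa (S : Set (H →L[ℂ] H)) (h : ∀ q ∈ S, IsSelfAdjoint q) (F : Finset S) :
    IsSelfAdjoint (∑ q ∈ F, (q : H →L[ℂ] H)) := by
  rw [isSelfAdjoint_iff, star_sum]
  exact Finset.sum_congr rfl fun q _ => (h q q.2).star_eq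

lemma pp_heF_id (S : Set (H →L[ℂ] H)) (hi : ∀ q ∈ S, IsIdempotentElem q)
    (ho : ∀ q ∈ S, ∀ q' ∈ S, q ≠ q' → q * q' = 0) (F : Finset S) :
    IsIdempotentElem (∑ q ∈ F, (q : H →L[ℂ] H)) := by
  show _ * _ = _
  rw [Finset.sum_mul_sum]
  refine Finset.sum_congr rfl fun q hq => ?_
  rw [Finset.sum_eq_single_of_mem q hq fun b _ hbq =>
    ho q q.2 b b.2 (fun hv => (Ne.symm hbq) (Subtype.ext hv))]
  exact (hi q q.2).eq

lemma pp_exists_family (M : VonNeumannAlgebra H)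
    (Es : (H →L[ℂ] H) →ₗ[ℂ] (H →L[ℂ] H))
    (hEs_sing : IsSingularOn (M : Set (H →L[ℂ] H)) Es) :
    ∃ S : Set (H →L[ℂ] H),
      (∀ q ∈ S, q ∈ M ∧ IsSelfAdjoint q ∧ IsIdempotentElem q ∧ Es q = 0) ∧
      (∀ q ∈ S, ∀ q' ∈ S, q ≠ q' → q * q' = 0) ∧
      ∀ ξ : H, HasSum (fun q : S => ‖(q : H →L[ℂ] H) ξ‖ ^ 2) (‖ξ‖ ^ 2) := by
  classical
  set 𝒞 : Set (Set (H →L[ℂ] H)) :=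
    {S | (∀ q ∈ S, q ∈ M ∧ IsSelfAdjoint q ∧ IsIdempotentElem q ∧ q ≠ 0 ∧ Es q = 0) ∧
      ∀ q ∈ S, ∀ q' ∈ S, q ≠ q' → q * q' = 0} with h𝒞
  have hzorn : ∀ c ⊆ 𝒞, IsChain (· ⊆ ·) c → ∃ ub ∈ 𝒞, ∀ s ∈ c, s ⊆ ub := by
    intro c hc hchain
    refine ⟨⋃₀ c, ⟨?_, ?_⟩, fun s hs => Set.subset_sUnion_of_mem hs⟩
    · rintro q ⟨s, hs, hq⟩
      exact (hc hs).1 q hq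
    · rintro q ⟨s, hs, hq⟩ q' ⟨s', hs', hq'⟩ hne
      rcases hchain.total hs hs' with h | h
      · exact (hc hs').2 q (h hq) q' hq' hne
      · exact (hc hs).2 q hq q' (h hq') hne
  obtain ⟨S, hS⟩ := zorn_subset 𝒞 hzorn
  have hSmem : ∀ q ∈ S, q ∈ M ∧ IsSelfAdjoint q ∧ IsIdempotentElem q ∧ q ≠ 0 ∧ Es q = 0 :=
    hS.prop.1
  have hSorth : ∀ q ∈ S, ∀ q' ∈ S, q ≠ q' → q * q' = 0 := hS.prop.2
  have horthv : ∀ q q' : S, q ≠ q' → ((q : H →L[ℂ] H)) * ((q' : H →L[ℂ] H)) = 0 :=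
    fun q q' h => hSorth q q.2 q' q'.2 fun hv => h (Subtype.ext hv)
  have heF_sa : ∀ F : Finset S, IsSelfAdjoint (∑ q ∈ F, (q : H →L[ℂ] H)) := by
    intro F
    rw [isSelfAdjoint_iff, star_sum]
    exact Finset.sum_congr rfl fun q _ => (hSmem q q.2).2.1.star_eq
  have heF_id : ∀ F : Finset S, IsIdempotentElem (∑ q ∈ F, (q : H →L[ℂ] H)) := by
    intro F
    show _ * _ = _
    rw [Finset.sum_mul_sum]
    refine Finset.sum_congr rfl fun q hq => ?_
    rw [Finset.sum_eq_single_of_mem q hq fun b _ hbq => horthv q b (Ne.symm hbq)]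
    exact (hSmem q q.2).2.2.1.eq
  have hsum_norm : ∀ (ξ : H) (F : Finset S),
      ∑ q ∈ F, ‖(q : H →L[ℂ] H) ξ‖ ^ 2
        = RCLike.re ⟪(∑ q ∈ F, (q : H →L[ℂ] H)) ξ, ξ⟫ := by
    intro ξ F
    rw [ContinuousLinearMap.sum_apply, sum_inner, map_sum]
    exact Finset.sum_congr rfl fun q _ =>
      (pp_re_inner_proj (hSmem q q.2).2.1 (hSmem q q.2).2.2.1 ξ).symm
  have hbdd : ∀ (ξ : H) (F : Finset S), ∑ q ∈ F, ‖(q : H →L[ℂ] H) ξ‖ ^ 2 ≤ ‖ξ‖ ^ 2 := by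
    intro ξ F
    rw [hsum_norm ξ F, pp_re_inner_proj (heF_sa F) (heF_id F) ξ]
    have h := pp_proj_norm_le (heF_sa F) (heF_id F) ξ
    have h0 : (0:ℝ) ≤ ‖(∑ q ∈ F, (q : H →L[ℂ] H)) ξ‖ := norm_nonneg _
    nlinarith
  have hsummable_r : ∀ ξ : H, Summable (fun q : S => ‖(q : H →L[ℂ] H) ξ‖ ^ 2) :=
    fun ξ => summable_of_sum_le (fun q => by positivity) (hbdd ξ)
  have hsummable : ∀ ξ : H, Summable fun q : S => (q : H →L[ℂ] H) ξ := by
    intro ξ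
    rw [summable_iff_vanishing_norm]
    intro ε hε
    obtain ⟨s, hs⟩ := summable_iff_vanishing_norm.mp (hsummable_r ξ) (ε ^ 2) (by positivity)
    refine ⟨s, fun t ht => ?_⟩
    have h1 := hs t ht
    have hpos : 0 ≤ ∑ q ∈ t, ‖(q : H →L[ℂ] H) ξ‖ ^ 2 :=
      Finset.sum_nonneg fun q _ => by positivity
    rw [Real.norm_of_nonneg hpos] at h1
    have hc : ‖(∑ q ∈ t, (q : H →L[ℂ] H)) ξ‖ ^ 2 = ∑ q ∈ t, ‖(q : H →L[ℂ] H) ξ‖ ^ 2 := by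
      rw [hsum_norm ξ t]
      exact (pp_re_inner_proj (heF_sa t) (heF_id t) ξ).symm
    have h3 : ‖(∑ q ∈ t, (q : H →L[ℂ] H)) ξ‖ ^ 2 < ε ^ 2 := by rw [hc]; exact h1
    have h4 := lt_of_pow_lt_pow_left₀ 2 hε.le h3
    rwa [ContinuousLinearMap.sum_apply] at h4
  -- construct the sum of the family as a continuous linear map
  let pL : H →ₗ[ℂ] H :=
    { toFun := fun ξ => ∑' q : S, (q : H →L[ℂ] H) ξ
      map_add' := fun x y => by
        simp_rw [map_add]
        exact Summable.tsum_add (hsummable x) (hsummable y)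
      map_smul' := fun c x => by
        simp only [RingHom.id_apply]
        simp_rw [map_smul]
        exact ((hsummable x).hasSum.const_smul c).tsum_eq }
  have hpbound : ∀ ξ : H, ‖pL ξ‖ ≤ 1 * ‖ξ‖ := by
    intro ξ
    rw [one_mul]
    have ht : Filter.Tendsto (fun F : Finset S => ∑ q ∈ F, (q : H →L[ℂ] H) ξ)
        Filter.atTop (nhds (pL ξ)) := (hsummable ξ).hasSum
    refine le_of_tendsto ht.norm (Filter.Eventually.of_forall fun F => ?_)
    rw [← ContinuousLinearMap.sum_apply]
    exact pp_proj_norm_le (heF_sa F) (heF_id F) ξ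
  let p : H →L[ℂ] H := pL.mkContinuous 1 hpbound
  have hp_apply : ∀ ξ, p ξ = ∑' q : S, (q : H →L[ℂ] H) ξ := fun ξ => rfl
  have hpq : ∀ q0 : S, p * (q0 : H →L[ℂ] H) = (q0 : H →L[ℂ] H) := by
    intro q0
    ext ξ
    rw [pp_mul_apply, hp_apply]
    rw [tsum_eq_single q0 fun b hb => ?_]
    · calc (q0 : H →L[ℂ] H) ((q0 : H →L[ℂ] H) ξ)
          = ((q0 : H →L[ℂ] H) * (q0 : H →L[ℂ] H)) ξ := rfl
        _ = (q0 : H →L[ℂ] H) ξ := by rw [(hSmem q0 q0.2).2.2.1.eq]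
    · calc (b : H →L[ℂ] H) ((q0 : H →L[ℂ] H) ξ)
          = ((b : H →L[ℂ] H) * (q0 : H →L[ℂ] H)) ξ := rfl
        _ = 0 := by rw [horthv b q0 hb]; rfl
  have hp_sa : IsSelfAdjoint p := by
    rw [ContinuousLinearMap.isSelfAdjoint_iff_isSymmetric]
    intro x y
    have hx : HasSum (fun q : S => (q : H →L[ℂ] H) x) (p x) := (hsummable x).hasSum
    have h1 : HasSum (fun q : S => ⟪y, (q : H →L[ℂ] H) x⟫) ⟪y, p x⟫ := by
      simpa using hx.mapL (innerSL ℂ y)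
    have h2 : HasSum (fun q : S => ⟪(q : H →L[ℂ] H) x, y⟫) (starRingEnd ℂ ⟪y, p x⟫) := by
      have := h1.star
      simp only [RCLike.star_def, inner_conj_symm] at this ⊢
      convert this using 2
    have h3 : (fun q : S => ⟪(q : H →L[ℂ] H) x, y⟫) = fun q : S => ⟪x, (q : H →L[ℂ] H) y⟫ := by
      funext q
      have ha := ContinuousLinearMap.adjoint_inner_left (q : H →L[ℂ] H) y x
      rwa [(hSmem q q.2).2.1.adjoint_eq] at ha
    rw [h3] at h2
    have h4 : HasSum (fun q : S => ⟪x, (q : H →L[ℂ] H) y⟫) ⟪x, p y⟫ := by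
      have hy : HasSum (fun q : S => (q : H →L[ℂ] H) y) (p y) := (hsummable y).hasSum
      simpa using hy.mapL (innerSL ℂ x)
    have h5 := h2.unique h4
    rw [inner_conj_symm] at h5
    exact h5
  have hp_id : IsIdempotentElem p := by
    show p * p = p
    ext ξ
    rw [pp_mul_apply]
    calc p (p ξ) = ∑' q : S, p ((q : H →L[ℂ] H) ξ) := by
          rw [hp_apply ξ]; exact ContinuousLinearMap.map_tsum p (hsummable ξ)
      _ = ∑' q : S, (q : H →L[ℂ] H) ξ := tsum_congr fun q => by
            rw [show p ((q : H →L[ℂ] H) ξ) = (p * (q : H →L[ℂ] H)) ξ from rfl, hpq q]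
      _ = p ξ := (hp_apply ξ).symm
  have hpM : p ∈ M := by
    have hcc : p ∈ Set.centralizer (Set.centralizer (M : Set (H →L[ℂ] H))) := by
      rw [Set.mem_centralizer_iff]
      intro y hy
      ext ξ
      rw [pp_mul_apply, pp_mul_apply, hp_apply, hp_apply,
        ContinuousLinearMap.map_tsum y (hsummable ξ)]
      refine tsum_congr fun q => ?_
      have hq := hy (q : H →L[ℂ] H) (by exact (hSmem q q.2).1)
      calc y ((q : H →L[ℂ] H) ξ) = ((q : H →L[ℂ] H) * y) ξ := by rw [hq]; rfl
        _ = (q : H →L[ℂ] H) (y ξ) := rfl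
    rw [M.centralizer_centralizer] at hcc
    exact hcc
  have hp_one : p = 1 := by
    by_contra hne
    have h1p_sa : IsSelfAdjoint ((1 : H →L[ℂ] H) - p) := (IsSelfAdjoint.one _).sub hp_sa
    have h1p_id : IsIdempotentElem ((1 : H →L[ℂ] H) - p) := hp_id.one_sub
    have h1p_ne : (1 : H →L[ℂ] H) - p ≠ 0 := sub_ne_zero.mpr (Ne.symm hne)
    have h1p_M : (1 : H →L[ℂ] H) - p ∈ (M : Set (H →L[ℂ] H)) := sub_mem (one_mem _) hpM
    obtain ⟨q', hq'M, hq'sa, hq'id, hq'ne, hq'le, hq'Es⟩ :=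
      hEs_sing _ h1p_M h1p_sa h1p_id h1p_ne
    have hcomp : ((1 : H →L[ℂ] H) - p) * q' = q' :=
      pp_proj_le_proj hq'sa hq'id h1p_sa h1p_id hq'le
    have hpq' : p * q' = 0 := by
      have h := hcomp
      rw [sub_mul, one_mul] at h
      exact sub_eq_self.mp h
    have hq'S : q' ∉ S := by
      intro hmem
      have h : p * q' = q' := hpq ⟨q', hmem⟩
      rw [hpq'] at h
      exact hq'ne h.symm
    have horth2 : ∀ q ∈ S, q * q' = 0 ∧ q' * q = 0 := by
      intro q hq
      have hqp : q * p = q := by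
        have hpqq : p * q = q := hpq ⟨q, hq⟩
        have h := congrArg star hpqq
        rwa [star_mul, hp_sa.star_eq, (hSmem q hq).2.1.star_eq] at h
      have h1 : q * q' = 0 := by
        calc q * q' = q * p * q' := by rw [hqp]
          _ = q * (p * q') := by rw [mul_assoc]
          _ = 0 := by rw [hpq', mul_zero]
      refine ⟨h1, ?_⟩
      have h := congrArg star h1
      rwa [star_mul, hq'sa.star_eq, (hSmem q hq).2.1.star_eq, star_zero] at h
    have hnew : insert q' S ∈ 𝒞 := by
      constructor
      · intro q hq
        rcases Set.mem_insert_iff.mp hq with rfl | hq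
        · exact ⟨hq'M, hq'sa, hq'id, hq'ne, hq'Es⟩
        · exact hSmem q hq
      · intro a ha b hb hne2
        rcases Set.mem_insert_iff.mp ha with ha' | ha' <;>
          rcases Set.mem_insert_iff.mp hb with hb' | hb'
        · exact absurd (ha'.trans hb'.symm) hne2
        · rw [ha']; exact (horth2 b hb').2
        · rw [hb']; exact (horth2 a ha').1
        · exact hSorth a ha' b hb' hne2
    have hsub := hS.2 hnew (Set.subset_insert q' S)
    exact hq'S (hsub (Set.mem_insert q' S))
  refine ⟨S, fun q hq => ⟨(hSmem q hq).1, (hSmem q hq).2.1, (hSmem q hq).2.2.1,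
    (hSmem q hq).2.2.2.2⟩, hSorth, fun ξ => ?_⟩
  have hxx : HasSum (fun q : S => (q : H →L[ℂ] H) ξ) ξ := by
    have h := (hsummable ξ).hasSum
    have hpξ : p ξ = ξ := by rw [hp_one]; rfl
    rw [hp_apply] at hpξ
    rwa [hpξ] at h
  have h1 : HasSum (fun q : S => ⟪ξ, (q : H →L[ℂ] H) ξ⟫) ⟪ξ, ξ⟫ := by
    simpa using hxx.mapL (innerSL ℂ ξ)
  have h2 : (fun q : S => ⟪ξ, (q : H →L[ℂ] H) ξ⟫)
      = fun q : S => ((‖(q : H →L[ℂ] H) ξ‖ ^ 2 : ℝ) : ℂ) := by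
    funext q
    have ha := ContinuousLinearMap.adjoint_inner_left (q : H →L[ℂ] H) ξ ξ
    rw [(hSmem q q.2).2.1.adjoint_eq] at ha
    rw [← ha, pp_inner_proj (hSmem q q.2).2.1 (hSmem q q.2).2.2.1 ξ]
    push_cast
    ring
  rw [h2] at h1
  have h3 : ⟪ξ, ξ⟫ = ((‖ξ‖ ^ 2 : ℝ) : ℂ) := by
    rw [inner_self_eq_norm_sq_to_K]; norm_cast
  rw [h3] at h1
  exact Complex.hasSum_ofReal.mp h1


/-- If a conditional expectation `E : M → N` satisfies the Pimsner–Popa inequality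
`E x ≥ λ • x` for positive `x ∈ M` with `λ > 0`, then `Z := E_n(1)` (where `E = E_n + E_s`
is the normal/singular decomposition) satisfies `λ • 1 ≤ Z ≤ 1`; in particular `Z` is
invertible with `‖Z⁻¹‖ ≤ λ⁻¹`. -/
theorem stmt_5 (M N : VonNeumannAlgebra H) (hNM : (N : Set (H →L[ℂ] H)) ⊆ M)
    (E En Es : (H →L[ℂ] H) →ₗ[ℂ] (H →L[ℂ] H))
    (hE : IsCondExpOn M N E)
    (l : ℝ) (hl : 0 < l)
    (hPP : ∀ x ∈ M, 0 ≤ x → l • x ≤ E x)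
    -- `E = E_n + E_s` is the decomposition of `E` into normal and singular positive parts
    (hEn_range : ∀ x ∈ M, En x ∈ N) (hEs_range : ∀ x ∈ M, Es x ∈ N)
    (hEn_pos : ∀ x ∈ M, 0 ≤ x → 0 ≤ En x) (hEs_pos : ∀ x ∈ M, 0 ≤ x → 0 ≤ Es x)
    (hEn_normal : IsNormalOn (M : Set (H →L[ℂ] H)) En)
    (hEs_sing : IsSingularOn (M : Set (H →L[ℂ] H)) Es)
    (hsum : ∀ x ∈ M, E x = En x + Es x) :
    l • (1 : H →L[ℂ] H) ≤ En 1 ∧ En 1 ≤ 1 ∧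
      ∃ W : H →L[ℂ] H, W ∈ N ∧ W * En 1 = 1 ∧ En 1 * W = 1 ∧ ‖W‖ ≤ l⁻¹ := by
  classical
  have h1M : (1 : H →L[ℂ] H) ∈ M := one_mem _
  have h0le1 : (0 : H →L[ℂ] H) ≤ 1 :=
    (ContinuousLinearMap.nonneg_iff_isPositive _).mpr ContinuousLinearMap.isPositive_one
  have hEn1_pos : (0 : H →L[ℂ] H) ≤ En 1 := hEn_pos 1 h1M h0le1
  have hEn1_sa : IsSelfAdjoint (En 1) :=
    (((ContinuousLinearMap.nonneg_iff_isPositive _).mp hEn1_pos).isSelfAdjoint)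
  -- upper bound
  have hupper : En 1 ≤ 1 := by
    have hdecomp := hsum 1 h1M
    rw [hE.unital] at hdecomp
    have hEs1 : (0 : H →L[ℂ] H) ≤ Es 1 := hEs_pos 1 h1M h0le1
    have h1 : (1 : H →L[ℂ] H) - En 1 = Es 1 := sub_eq_of_eq_add' hdecomp
    rw [ContinuousLinearMap.le_def, h1]
    rw [ContinuousLinearMap.nonneg_iff_isPositive] at hEs1
    exact hEs1
  -- lower bound
  obtain ⟨S, hSmem, hSorth, hSsum⟩ := pp_exists_family M Es hEs_sing
  have hSsa : ∀ q ∈ S, IsSelfAdjoint q := fun q hq => (hSmem q hq).2.1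
  have hSid : ∀ q ∈ S, IsIdempotentElem q := fun q hq => (hSmem q hq).2.2.1
  have hlower : l • (1 : H →L[ℂ] H) ≤ En 1 := by
    rw [ContinuousLinearMap.le_def]
    constructor
    · exact (hEn1_sa.sub (IsSelfAdjoint.smul (star_trivial l) (IsSelfAdjoint.one _))).isSymmetric
    intro ξ
    -- reduce to a scalar inequality
    have hkey : l * ‖ξ‖ ^ 2 ≤ RCLike.re ⟪En 1 ξ, ξ⟫ := by
      have hF : ∀ F : Finset S,
          l * (∑ q ∈ F, ‖(q : H →L[ℂ] H) ξ‖ ^ 2) ≤ RCLike.re ⟪En 1 ξ, ξ⟫ := by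
        intro F
        set eF : H →L[ℂ] H := ∑ q ∈ F, (q : H →L[ℂ] H) with heF
        have heF_sa : IsSelfAdjoint eF := pp_heF_sa S hSsa F
        have heF_id : IsIdempotentElem eF := pp_heF_id S hSid hSorth F
        have heFM : eF ∈ M := sum_mem fun q _ => (hSmem q q.2).1
        have heF_nonneg : (0 : H →L[ℂ] H) ≤ eF := pp_proj_nonneg heF_sa heF_id
        have heF_le_one : eF ≤ 1 := pp_proj_le_one heF_sa heF_id
        have hEs_eF : Es eF = 0 := by
          rw [heF, map_sum]
          exact Finset.sum_eq_zero fun q _ => (hSmem q q.2).2.2.2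
        have hPP' : l • eF ≤ E eF := hPP eF heFM heF_nonneg
        have hE_eF : E eF = En eF := by rw [hsum eF heFM, hEs_eF, add_zero]
        have hmono : En eF ≤ En 1 := by
          have h0 : (0 : H →L[ℂ] H) ≤ (1 : H →L[ℂ] H) - eF := sub_nonneg.mpr heF_le_one
          have h1 : (1 : H →L[ℂ] H) - eF ∈ M := sub_mem h1M heFM
          have h2 := hEn_pos _ h1 h0
          rw [map_sub] at h2
          exact sub_nonneg.mp h2
        have hchain : l • eF ≤ En 1 := le_trans (le_trans hPP' (le_of_eq hE_eF)) hmono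
        have hpos := ((ContinuousLinearMap.le_def _ _).mp hchain).2 ξ
        simp only [ContinuousLinearMap.reApplyInnerSelf, ContinuousLinearMap.sub_apply] at hpos
        rw [inner_sub_left, map_sub] at hpos
        have hsmul : RCLike.re ⟪(l • eF) ξ, ξ⟫ = l * RCLike.re ⟪eF ξ, ξ⟫ := by
          rw [ContinuousLinearMap.smul_apply,
            RCLike.real_smul_eq_coe_smul (K := ℂ) l (eF ξ), inner_smul_left]
          simp [RCLike.conj_ofReal]
        have hsumF : RCLike.re ⟪eF ξ, ξ⟫ = ∑ q ∈ F, ‖(q : H →L[ℂ] H) ξ‖ ^ 2 := by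
          rw [heF, ContinuousLinearMap.sum_apply, sum_inner, map_sum]
          exact Finset.sum_congr rfl fun q _ =>
            pp_re_inner_proj (hSsa q q.2) (hSid q q.2) ξ
        rw [hsmul, hsumF] at hpos
        linarith
      have htend : Filter.Tendsto
          (fun F : Finset S => l * ∑ q ∈ F, ‖(q : H →L[ℂ] H) ξ‖ ^ 2)
          Filter.atTop (nhds (l * ‖ξ‖ ^ 2)) := (hSsum ξ).const_mul l
      exact le_of_tendsto htend (Filter.Eventually.of_forall hF)
    simp only [ContinuousLinearMap.reApplyInnerSelf, ContinuousLinearMap.sub_apply]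
    rw [inner_sub_left, map_sub]
    have hsmul1 : RCLike.re ⟪(l • (1 : H →L[ℂ] H)) ξ, ξ⟫ = l * ‖ξ‖ ^ 2 := by
      rw [ContinuousLinearMap.smul_apply, ContinuousLinearMap.one_apply,
        RCLike.real_smul_eq_coe_smul (K := ℂ) l ξ, inner_smul_left]
      simp only [RCLike.conj_ofReal, RCLike.re_ofReal_mul]
      rw [inner_self_eq_norm_sq]
    rw [hsmul1]
    linarith
  refine ⟨hlower, hupper, ?_⟩
  -- invertibility
  set Z : H →L[ℂ] H := En 1 with hZ
  have hlow : ∀ x : H, l * ‖x‖ ^ 2 ≤ RCLike.re ⟪Z x, x⟫ := by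
    intro x
    have hpos := ((ContinuousLinearMap.le_def _ _).mp hlower).2 x
    simp only [ContinuousLinearMap.reApplyInnerSelf, ContinuousLinearMap.sub_apply] at hpos
    rw [inner_sub_left, map_sub] at hpos
    have hsmul1 : RCLike.re ⟪(l • (1 : H →L[ℂ] H)) x, x⟫ = l * ‖x‖ ^ 2 := by
      rw [ContinuousLinearMap.smul_apply, ContinuousLinearMap.one_apply,
        RCLike.real_smul_eq_coe_smul (K := ℂ) l x, inner_smul_left]
      simp only [RCLike.conj_ofReal, RCLike.re_ofReal_mul]
      rw [inner_self_eq_norm_sq]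
    rw [hsmul1] at hpos
    linarith
  have hlownorm : ∀ x : H, l * ‖x‖ ≤ ‖Z x‖ := by
    intro x
    have h1 := hlow x
    have h2 : RCLike.re ⟪Z x, x⟫ ≤ ‖⟪Z x, x⟫‖ := RCLike.re_le_norm _
    have h3 : ‖⟪Z x, x⟫‖ ≤ ‖Z x‖ * ‖x‖ := norm_inner_le_norm _ _
    by_cases hx : ‖x‖ = 0
    · rw [hx, mul_zero]; positivity
    · have hxpos : 0 < ‖x‖ := (norm_nonneg x).lt_of_ne (Ne.symm hx)
      have : l * ‖x‖ * ‖x‖ ≤ ‖Z x‖ * ‖x‖ := by nlinarith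
      exact le_of_mul_le_mul_right this hxpos
  have hunit : IsUnit Z := by
    refine ContinuousLinearMap.isUnit_of_forall_le_norm_inner_map Z (c := l.toNNReal)
      (by simpa using hl) fun x => ?_
    have h1 := hlow x
    have h2 : RCLike.re ⟪Z x, x⟫ ≤ ‖⟪Z x, x⟫‖ := RCLike.re_le_norm _
    rw [Real.coe_toNNReal _ hl.le]
    calc ‖x‖ ^ 2 * l = l * ‖x‖ ^ 2 := by ring
      _ ≤ ‖⟪Z x, x⟫‖ := le_trans h1 h2
  obtain ⟨u, hu⟩ := hunit
  refine ⟨(↑u⁻¹ : H →L[ℂ] H), ?_, ?_, ?_, ?_⟩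
  · -- membership in N
    have hZN : Z ∈ N := hEn_range 1 h1M
    have hcc : (↑u⁻¹ : H →L[ℂ] H) ∈
        Set.centralizer (Set.centralizer (N : Set (H →L[ℂ] H))) := by
      rw [Set.mem_centralizer_iff]
      intro y hy
      have hyZ : Z * y = y * Z := hy Z hZN
      have hZu : (↑u⁻¹ : H →L[ℂ] H) * Z = 1 := by rw [← hu]; exact u.inv_mul
      have huZ : Z * (↑u⁻¹ : H →L[ℂ] H) = 1 := by rw [← hu]; exact u.mul_inv
      conv_lhs => rw [← one_mul (y * (↑u⁻¹ : H →L[ℂ] H)), ← hZu, mul_assoc,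
        ← mul_assoc Z y, hyZ, mul_assoc y, huZ, mul_one]
    rw [N.centralizer_centralizer] at hcc
    exact hcc
  · rw [← hu]; exact u.inv_mul
  · rw [← hu]; exact u.mul_inv
  · refine ContinuousLinearMap.opNorm_le_bound _ (by positivity) fun y => ?_
    have h1 := hlownorm ((↑u⁻¹ : H →L[ℂ] H) y)
    have h2 : Z ((↑u⁻¹ : H →L[ℂ] H) y) = y := by
      have huZ : Z * (↑u⁻¹ : H →L[ℂ] H) = 1 := by rw [← hu]; exact u.mul_inv
      calc Z ((↑u⁻¹ : H →L[ℂ] H) y) = (Z * (↑u⁻¹ : H →L[ℂ] H)) y := rfl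
        _ = y := by rw [huZ]; rfl
    rw [h2] at h1
    rw [inv_mul_eq_div, le_div_iff₀ hl]
    linarith
end

section
/- Let N ⊆ M be von Neumann algebras admitting a normal conditional expectation Ẽ : M → N satisfying Ẽ(x) ≥ λ x for all positive x ∈ M with λ > 0. Then every conditional expectation F : M → N is automatically normal. -/
variable {H : Type*} [NormedAddCommGroup H] [InnerProductSpace ℂ H] [CompleteSpace H]

set_option synthInstance.maxHeartbeats 1000000
set_option maxHeartbeats 1000000

private lemma smul_nonneg_clm (l : ℝ) (hl : 0 ≤ l) {c : H →L[ℂ] H} (hc : 0 ≤ c) :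
    0 ≤ l • c := by
  have h := star_left_conjugate_nonneg hc ((Real.sqrt l : ℂ) • (1 : H →L[ℂ] H))
  have e : star ((Real.sqrt l : ℂ) • (1 : H →L[ℂ] H)) * c *
      ((Real.sqrt l : ℂ) • (1 : H →L[ℂ] H)) = l • c := by
    simp [star_smul, smul_mul_assoc, mul_smul_comm, smul_smul, ← Complex.coe_smul]
    norm_cast
    rw [Real.mul_self_sqrt hl]
  rwa [e] at h

private lemma smul_le_smul_clm (l : ℝ) (hl : 0 ≤ l) {a b : H →L[ℂ] H} (h : a ≤ b) :
    l • a ≤ l • b := by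
  have := smul_nonneg_clm l hl (sub_nonneg.2 h)
  rwa [smul_sub, sub_nonneg] at this

/-- If `N ⊆ M` admits a normal conditional expectation `Ẽ : M → N` satisfying the
Pimsner–Popa inequality `Ẽ x ≥ λ • x` for positive `x ∈ M` with `λ > 0`, then every
conditional expectation `F : M → N` is automatically normal. -/
theorem stmt_8 (M N : VonNeumannAlgebra H) (hNM : (N : Set (H →L[ℂ] H)) ⊆ M)
    (Et : (H →L[ℂ] H) →ₗ[ℂ] (H →L[ℂ] H))
    (hEt : IsCondExpOn M N Et)
    (hEt_normal : IsNormalOn (M : Set (H →L[ℂ] H)) Et)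
    (l : ℝ) (hl : 0 < l)
    (hPP : ∀ x ∈ M, 0 ≤ x → l • x ≤ Et x)
    (F : (H →L[ℂ] H) →ₗ[ℂ] (H →L[ℂ] H))
    (hF : IsCondExpOn M N F) :
    IsNormalOn (M : Set (H →L[ℂ] H)) F := by
  intro ι _ _ _ f hfM hfpos hfmono x hxM hlub
  have hfx : ∀ i, f i ≤ x := fun i => hlub.1 ⟨i, rfl⟩
  have hsub_mem : ∀ i, x - f i ∈ M := fun i => sub_mem hxM (hfM i)
  have hupper : ∀ i, F (f i) ≤ F x := by
    intro i
    have := hF.pos _ (hsub_mem i) (sub_nonneg.2 (hfx i))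
    rw [map_sub, sub_nonneg] at this
    exact this
  have key : ∀ i, l • (F x - F (f i)) ≤ Et x - Et (f i) := by
    intro i
    have hy : (0 : H →L[ℂ] H) ≤ x - f i := sub_nonneg.2 (hfx i)
    have hPPy := hPP _ (hsub_mem i) hy
    have h1 : Et (x - f i) ∈ M := hNM (hEt.range_mem _ (hsub_mem i))
    have hsmul_mem : l • (x - f i) ∈ M := by
      rw [← Complex.coe_smul]
      exact M.smul_mem (hsub_mem i) _
    have h3 : (0 : H →L[ℂ] H) ≤ F (Et (x - f i) - l • (x - f i)) :=
      hF.pos _ (sub_mem h1 hsmul_mem) (sub_nonneg.2 hPPy)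
    have h4 : F (Et (x - f i)) = Et (x - f i) := hF.fix _ (hEt.range_mem _ (hsub_mem i))
    have h5 : F (l • (x - f i)) = l • F (x - f i) := by
      rw [← Complex.coe_smul, map_smul, Complex.coe_smul]
    rw [map_sub, h4, h5, sub_nonneg] at h3
    calc l • (F x - F (f i)) = l • F (x - f i) := by rw [map_sub]
      _ ≤ Et (x - f i) := h3
      _ = Et x - Et (f i) := by rw [map_sub]
  constructor
  · rintro _ ⟨_, ⟨i, rfl⟩, rfl⟩
    exact hupper i
  · intro b hb
    have hEtlub := hEt_normal ι f hfM hfpos hfmono x hxM hlub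
    have hz : ∀ i, l • (F x - b) ≤ Et x - Et (f i) := by
      intro i
      have h1 : F (f i) ≤ b := hb ⟨f i, ⟨i, rfl⟩, rfl⟩
      exact le_trans (smul_le_smul_clm l hl.le (sub_le_sub_left h1 (F x))) (key i)
    have hub : Et x ≤ Et x - l • (F x - b) := by
      refine hEtlub.2 ?_
      rintro _ ⟨_, ⟨i, rfl⟩, rfl⟩
      have h := hz i
      show Et (f i) ≤ Et x - l • (F x - b)
      exact le_sub_comm.1 h
    have hnp : l • (F x - b) ≤ 0 := by
      have := sub_le_sub_left hub (Et x)
      simpa using this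
    have hfin : F x - b ≤ 0 := by
      have h2 : (0 : H →L[ℂ] H) ≤ l • (b - F x) := by
        have e : l • (b - F x) = -(l • (F x - b)) := by
          rw [smul_sub, smul_sub, neg_sub]
        rw [e]
        exact neg_nonneg.2 hnp
      have h3 := smul_nonneg_clm l⁻¹ (inv_nonneg.2 hl.le) h2
      rw [smul_smul, inv_mul_cancel₀ hl.ne', one_smul, sub_nonneg] at h3
      exact sub_nonpos.2 h3
    exact sub_nonpos.1 hfin
end

section
/- Let I_n = (a_n, b_n) ⊂ (0,∞) be an increasing sequence of intervals with a_n → 0 and b_n → ∞, and fix s ∈ ℝ. Define δ^{I_n}_s(t) = (e^s b_n (t − a_n) + a_n (b_n − t)) / (e^s (t − a_n) + b_n − t). Then δ^{I_n}_s converges to the dilation δ_s(t) = e^s t uniformly on every compact subset of (0,∞), and the same holds for all derivatives. -/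
open Filter

private lemma evEq_iteratedDeriv {f g : ℝ → ℝ} {x : ℝ} (h : f =ᶠ[nhds x] g) (n : ℕ) :
    iteratedDeriv n f =ᶠ[nhds x] iteratedDeriv n g := by
  induction n with
  | zero => simpa [iteratedDeriv_zero] using h
  | succ n ih => simp only [iteratedDeriv_succ]; exact ih.deriv

private lemma iterDeriv_const_zero (j : ℕ) : ∀ (C x : ℝ),
    iteratedDeriv (j + 1) (fun _ : ℝ => C) x = 0 := by
  induction j with
  | zero => intro C x; simp [iteratedDeriv_one]
  | succ j ih =>
    intro C x
    rw [iteratedDeriv_succ', show deriv (fun _ : ℝ => C) = (fun _ : ℝ => (0:ℝ)) from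
      funext fun y => deriv_const y C]
    exact ih 0 x

private lemma lin_iterDeriv (E : ℝ) (j : ℕ) (x : ℝ) :
    iteratedDeriv (j + 2) (fun t : ℝ => E * t) x = 0 := by
  rw [iteratedDeriv_succ', show deriv (fun t : ℝ => E * t) = (fun _ : ℝ => E) from
    funext fun y => (((hasDerivAt_id y).const_mul E).congr_deriv (mul_one E)).deriv]
  exact iterDeriv_const_zero j E x

private lemma lin_iterDeriv_one (E : ℝ) (x : ℝ) :
    iteratedDeriv 1 (fun t : ℝ => E * t) x = E := by
  rw [iteratedDeriv_one]
  exact (((hasDerivAt_id x).const_mul E).congr_deriv (mul_one E)).deriv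

private lemma key_formula (A B c d : ℝ) (k : ℕ) : ∀ (x : ℝ), c * x + d ≠ 0 →
    iteratedDeriv k (fun t : ℝ => A + B * (c * t + d)⁻¹) x
      = (if k = 0 then A else 0)
        + B * ((-1 : ℝ) ^ k * (k.factorial : ℝ) * c ^ k * ((c * x + d) ^ (k + 1))⁻¹) := by
  induction k with
  | zero =>
    intro x hx
    simp [iteratedDeriv_zero]
  | succ k ih =>
    intro x hx
    have hU : IsOpen {y : ℝ | c * y + d ≠ 0} :=
      isOpen_ne.preimage (by continuity)
    have hev : iteratedDeriv k (fun t : ℝ => A + B * (c * t + d)⁻¹) =ᶠ[nhds x]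
        (fun y : ℝ => (if k = 0 then A else 0)
          + B * ((-1 : ℝ) ^ k * (k.factorial : ℝ) * c ^ k * ((c * y + d) ^ (k + 1))⁻¹)) :=
      eventually_of_mem (hU.mem_nhds hx) (fun y hy => ih y hy)
    rw [iteratedDeriv_succ, hev.deriv_eq]
    have h1 : HasDerivAt (fun y : ℝ => c * y + d) c x := by
      simpa using ((hasDerivAt_id x).const_mul c).add_const d
    have h2 := (h1.pow (k + 1)).inv (pow_ne_zero _ hx)
    have h3 := (((h2.const_mul ((-1 : ℝ) ^ k * (k.factorial : ℝ) * c ^ k)).const_mul B).const_add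
      (if k = 0 then A else 0))
    erw [h3.deriv]
    have hkf : ((k + 1).factorial : ℝ) = (k + 1) * (k.factorial : ℝ) := by
      push_cast [Nat.factorial_succ]; ring
    simp only [Nat.succ_ne_zero, if_false, hkf, Pi.pow_apply, Nat.add_sub_cancel, Nat.cast_add, Nat.cast_one]
    field_simp
    ring

private lemma formula_eq (E c A B dd an bn : ℝ) (hc : c ≠ 0) (hc_def : c = E - 1)
    (hA : A = (E * bn - an) / c) (hB : B = -(E * (bn - an) ^ 2) / c) (hdd : dd = bn - E * an)
    (k : ℕ) (x : ℝ) (hx : c * x + dd ≠ 0) :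
    iteratedDeriv k
      (fun t : ℝ => (E * bn * (t - an) + an * (bn - t)) / (E * (t - an) + bn - t)) x
      = (if k = 0 then A else 0)
        + B * ((-1 : ℝ) ^ k * (k.factorial : ℝ) * c ^ k * ((c * x + dd) ^ (k + 1))⁻¹) := by
  subst hA hB hdd hc_def
  set c := E - 1 with hc_def
  have hU : IsOpen {y : ℝ | c * y + (bn - E * an) ≠ 0} :=
    isOpen_ne.preimage (by continuity)
  have heqf : (fun t : ℝ => (E * bn * (t - an) + an * (bn - t)) / (E * (t - an) + bn - t))
      =ᶠ[nhds x] (fun t : ℝ =>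
        (E * bn - an) / c + (-(E * (bn - an) ^ 2) / c) * (c * t + (bn - E * an))⁻¹) := by
    refine eventually_of_mem (hU.mem_nhds hx) (fun y hy => ?_)
    have hy' : c * y + (bn - E * an) ≠ 0 := hy
    have hden : E * (y - an) + bn - y = c * y + (bn - E * an) := by rw [hc_def]; ring
    show (E * bn * (y - an) + an * (bn - y)) / (E * (y - an) + bn - y)
      = (E * bn - an) / c + -(E * (bn - an) ^ 2) / c * (c * y + (bn - E * an))⁻¹
    rw [hden, div_eq_iff hy', add_mul, mul_assoc (-(E * (bn - an) ^ 2) / c), inv_mul_cancel₀ hy', mul_one]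
    field_simp
    ring
  rw [(evEq_iteratedDeriv heqf k).self_of_nhds,
    key_formula ((E * bn - an) / c) (-(E * (bn - an) ^ 2) / c) c (bn - E * an) k x hx]

private lemma squeeze_tuo {F : ℕ → ℝ → ℝ} {f : ℝ → ℝ} {K : Set ℝ} {e : ℕ → ℝ}
    (he : Tendsto e atTop (nhds 0))
    (h : ∀ᶠ n in atTop, ∀ x ∈ K, dist (f x) (F n x) ≤ e n) :
    TendstoUniformlyOn F f atTop K := by
  rw [Metric.tendstoUniformlyOn_iff]
  intro ε hε
  filter_upwards [h, he.eventually_lt_const hε] with n hn hen x hx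
  exact lt_of_le_of_lt (hn x hx) hen

set_option maxHeartbeats 2000000 in
/-- Let `I n = (a n, b n) ⊂ (0,∞)` be an increasing sequence of intervals with `a n → 0`
and `b n → ∞`, and fix `s : ℝ`.  The dilations of the intervals `I n`,
`δ^{I_n}_s (t) = (e^s b_n (t − a_n) + a_n (b_n − t)) / (e^s (t − a_n) + b_n − t)`,
converge to the dilation `δ_s(t) = e^s t` uniformly on every compact subset of `(0,∞)`,
together with all their derivatives. -/
theorem stmt_15 (s : ℝ) (a b : ℕ → ℝ)
    (ha_pos : ∀ n, 0 < a n) (hab : ∀ n, a n < b n)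
    (ha_anti : Antitone a) (hb_mono : Monotone b)
    (ha_lim : Tendsto a atTop (nhds 0)) (hb_lim : Tendsto b atTop atTop) :
    ∀ K : Set ℝ, K ⊆ Set.Ioi (0 : ℝ) → IsCompact K → ∀ k : ℕ,
      TendstoUniformlyOn
        (fun n => iteratedDeriv k (fun t : ℝ =>
          (Real.exp s * b n * (t - a n) + a n * (b n - t)) /
            (Real.exp s * (t - a n) + b n - t)))
        (iteratedDeriv k (fun t : ℝ => Real.exp s * t)) atTop K := by
  intro K hK hKc k
  rcases K.eq_empty_or_nonempty with rfl | hne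
  · rw [Metric.tendstoUniformlyOn_iff]
    exact fun ε hε => Eventually.of_forall fun n x hx => absurd hx (Set.notMem_empty x)
  by_cases hs : s = 0
  · subst hs
    have hfun : ∀ n : ℕ, (fun t : ℝ =>
        (Real.exp 0 * b n * (t - a n) + a n * (b n - t)) /
          (Real.exp 0 * (t - a n) + b n - t)) = (fun t : ℝ => Real.exp 0 * t) := by
      intro n; funext t
      have hba : b n - a n ≠ 0 := ne_of_gt (sub_pos.2 (hab n))
      rw [Real.exp_zero]
      rw [div_eq_iff (by
        rw [show (1:ℝ) * (t - a n) + b n - t = b n - a n from by ring]; exact hba)]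
      ring
    rw [show (fun n => iteratedDeriv k (fun t : ℝ =>
        (Real.exp 0 * b n * (t - a n) + a n * (b n - t)) /
          (Real.exp 0 * (t - a n) + b n - t)))
      = (fun _ : ℕ => iteratedDeriv k (fun t : ℝ => Real.exp 0 * t)) from
        funext fun n => by rw [hfun n]]
    rw [Metric.tendstoUniformlyOn_iff]
    exact fun ε hε => Eventually.of_forall fun n x hx => by simpa using hε
  -- main case : s ≠ 0
  set E := Real.exp s with hE_def
  have hE : (0:ℝ) < E := Real.exp_pos s
  have hE1 : E ≠ 1 := fun h => hs (by rwa [Real.exp_eq_one_iff] at h)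
  set c : ℝ := E - 1 with hc_def
  have hc : c ≠ 0 := sub_ne_zero.2 hE1
  have hcabs : 0 ≤ |c| := abs_nonneg c
  have hmK : sInf K ∈ K := hKc.sInf_mem hne
  have hMK : sSup K ∈ K := hKc.sSup_mem hne
  set m : ℝ := sInf K with hm_def
  set M : ℝ := sSup K with hM_def
  have hm0 : 0 < m := hK hmK
  have hM0 : 0 < M := hK hMK
  have hxm : ∀ x ∈ K, m ≤ x := fun x hx => csInf_le hKc.bddBelow hx
  have hxM : ∀ x ∈ K, x ≤ M := fun x hx => le_csSup hKc.bddAbove hx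
  have hbinv : Tendsto (fun n => (b n)⁻¹) atTop (nhds 0) := hb_lim.inv_tendsto_atTop
  have hevA : ∀ᶠ n in atTop, a n < m := ha_lim.eventually_lt_const hm0
  have hevB : ∀ᶠ n in atTop, 2 * M + |c| * M + 1 ≤ b n :=
    hb_lim.eventually_ge_atTop _
  -- common facts
  have facts : ∀ n : ℕ, a n < m → 2 * M + |c| * M + 1 ≤ b n → ∀ x ∈ K,
      a n < x ∧ x ≤ M ∧ 0 < b n ∧ 1 ≤ b n ∧ 2 * M ≤ b n ∧ |c| * M ≤ b n ∧
      b n / 2 ≤ c * x + (b n - E * a n) ∧ 0 < c * x + (b n - E * a n) ∧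
      c * x + (b n - E * a n) ≤ |c| * M + b n := by
    intro n han hbn x hx
    have hmx : m ≤ x := hxm x hx
    have hxM' : x ≤ M := hxM x hx
    have hax : a n < x := lt_of_lt_of_le han hmx
    have han0 : 0 < a n := ha_pos n
    have habs : 0 ≤ |c| * M := mul_nonneg hcabs hM0.le
    have hb1 : 1 ≤ b n := by linarith
    have hb2M : 2 * M ≤ b n := by linarith
    have hbcM : |c| * M ≤ b n := by linarith
    have hbpos : 0 < b n := by linarith
    have hD1 : c * x + (b n - E * a n) = E * (x - a n) + (b n - x) := by
      rw [hc_def]; ring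
    have hD2 : 0 ≤ E * (x - a n) := mul_nonneg hE.le (by linarith)
    have hDb : b n - M ≤ c * x + (b n - E * a n) := by rw [hD1]; linarith
    have hDhalf : b n / 2 ≤ c * x + (b n - E * a n) := by linarith
    have hDpos : 0 < c * x + (b n - E * a n) := by linarith
    have hcx : c * x ≤ |c| * M := by
      calc c * x ≤ |c * x| := le_abs_self _
        _ = |c| * |x| := abs_mul c x
        _ = |c| * x := by rw [abs_of_pos (by linarith : (0:ℝ) < x)]
        _ ≤ |c| * M := mul_le_mul_of_nonneg_left hxM' hcabs
    have hEan : 0 < E * a n := mul_pos hE han0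
    have hDub : c * x + (b n - E * a n) ≤ |c| * M + b n := by linarith
    exact ⟨hax, hxM', hbpos, hb1, hb2M, hbcM, hDhalf, hDpos, hDub⟩
  match k with
  | 0 =>
    refine squeeze_tuo (e := fun n =>
        (2 * |c| * (E * M ^ 2 + a 0 * (E + 1) * M)) * (b n)⁻¹ + (2 * |c|) * a n) ?_ ?_
    · have h1 := hbinv.const_mul (2 * |c| * (E * M ^ 2 + a 0 * (E + 1) * M))
      have h2 := ha_lim.const_mul (2 * |c|)
      simpa using h1.add h2
    · filter_upwards [hevA, hevB] with n han hbn
      intro x hx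
      obtain ⟨hax, hxM', hbpos, hb1, hb2M, hbcM, hDhalf, hDpos, hDub⟩ := facts n han hbn x hx
      have hDne : c * x + (b n - E * a n) ≠ 0 := ne_of_gt hDpos
      rw [formula_eq E c _ _ _ (a n) (b n) hc hc_def rfl rfl rfl 0 x hDne]
      rw [iteratedDeriv_zero, Real.dist_eq]
      have hdiff : E * x - ((if 0 = 0 then (E * b n - a n) / c else 0)
            + -(E * (b n - a n) ^ 2) / c *
              ((-1:ℝ) ^ 0 * ((Nat.factorial 0 : ℕ) : ℝ) * c ^ 0 *
                ((c * x + (b n - E * a n)) ^ (0 + 1))⁻¹))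
          = c * (E * x ^ 2 - a n * (E + 1) * x + a n * b n) / (c * x + (b n - E * a n)) := by
        simp only [if_pos rfl, pow_zero, Nat.factorial_zero, Nat.cast_one, one_mul, mul_one,
          pow_one, zero_add, if_true]
        rw [eq_div_iff hDne, sub_mul, add_mul, mul_assoc (-(E * (b n - a n) ^ 2) / c),
          inv_mul_cancel₀ hDne, mul_one]
        field_simp
        ring
      rw [hdiff, abs_div, abs_of_pos hDpos, abs_mul]
      have hx0 : 0 < x := lt_trans (ha_pos n) hax
      have han0 : 0 < a n := ha_pos n
      have hP : |E * x ^ 2 - a n * (E + 1) * x + a n * b n|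
          ≤ E * M ^ 2 + a n * (E + 1) * M + a n * b n := by
        rw [abs_le]
        constructor
        · nlinarith [mul_pos han0 hbpos, mul_nonneg hE.le (sq_nonneg x),
            mul_le_mul_of_nonneg_left hxM'
              (mul_nonneg han0.le (by linarith : (0:ℝ) ≤ E + 1)),
            mul_nonneg hE.le (sq_nonneg M)]
        · nlinarith [mul_pos han0 hbpos,
            mul_nonneg (mul_nonneg han0.le (by linarith : (0:ℝ) ≤ E + 1)) hx0.le,
            mul_le_mul_of_nonneg_left (mul_le_mul hxM' hxM' hx0.le hM0.le) hE.le]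
      have han_le : a n ≤ a 0 := ha_anti (Nat.zero_le n)
      have heq : ((2 * |c| * (E * M ^ 2 + a 0 * (E + 1) * M)) * (b n)⁻¹ + (2 * |c|) * a n)
          * (b n / 2) = |c| * (E * M ^ 2 + a 0 * (E + 1) * M) + |c| * (a n * b n) := by
        field_simp
      have hepos : 0 ≤ (2 * |c| * (E * M ^ 2 + a 0 * (E + 1) * M)) * (b n)⁻¹ + (2 * |c|) * a n := by
        have c1 : 0 ≤ E * M ^ 2 + a 0 * (E + 1) * M := by
          nlinarith [mul_nonneg (mul_nonneg (ha_pos 0).le (by linarith : (0:ℝ) ≤ E + 1)) hM0.le, mul_le_mul_of_nonneg_left (mul_le_mul (le_refl M) (le_refl M) hM0.le hM0.le) hE.le]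
        have := mul_nonneg (mul_nonneg (by positivity : (0:ℝ) ≤ 2 * |c|) c1) (inv_nonneg.2 hbpos.le)
        nlinarith [mul_nonneg (by positivity : (0:ℝ) ≤ 2 * |c|) (ha_pos n).le]
      rw [div_le_iff₀ hDpos]
      calc |c| * |E * x ^ 2 - a n * (E + 1) * x + a n * b n|
          ≤ |c| * (E * M ^ 2 + a n * (E + 1) * M + a n * b n) :=
            mul_le_mul_of_nonneg_left hP hcabs
        _ ≤ |c| * (E * M ^ 2 + a 0 * (E + 1) * M) + |c| * (a n * b n) := by
            nlinarith [mul_le_mul_of_nonneg_left (mul_le_mul_of_nonneg_right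
              (mul_le_mul_of_nonneg_right han_le (by linarith : (0:ℝ) ≤ E + 1)) hM0.le) hcabs]
        _ = ((2 * |c| * (E * M ^ 2 + a 0 * (E + 1) * M)) * (b n)⁻¹ + (2 * |c|) * a n)
              * (b n / 2) := heq.symm
        _ ≤ _ := mul_le_mul_of_nonneg_left hDhalf hepos
  | 1 =>
    refine squeeze_tuo (e := fun n => (12 * E * |c| * M) * (b n)⁻¹) ?_ ?_
    · simpa using hbinv.const_mul (12 * E * |c| * M)
    · filter_upwards [hevA, hevB] with n han hbn
      intro x hx
      obtain ⟨hax, hxM', hbpos, hb1, hb2M, hbcM, hDhalf, hDpos, hDub⟩ := facts n han hbn x hx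
      have hDne : c * x + (b n - E * a n) ≠ 0 := ne_of_gt hDpos
      rw [formula_eq E c _ _ _ (a n) (b n) hc hc_def rfl rfl rfl 1 x hDne,
        lin_iterDeriv_one E x, Real.dist_eq]
      have han0 : 0 < a n := ha_pos n
      set D := c * x + (b n - E * a n) with hD_def
      have hdiff : E - ((if 1 = 0 then (E * b n - a n) / c else 0)
            + -(E * (b n - a n) ^ 2) / c *
              ((-1:ℝ) ^ 1 * ((Nat.factorial 1 : ℕ) : ℝ) * c ^ 1 * (D ^ (1 + 1))⁻¹))
          = E * c * (x - a n) * (D + (b n - a n)) / D ^ 2 := by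
        simp only [if_neg one_ne_zero, pow_one, Nat.factorial_one, Nat.cast_one, one_mul,
          zero_add]
        have hDsub : D - (b n - a n) = c * (x - a n) := by rw [hD_def, hc_def]; ring
        field_simp
        linear_combination (E * (D + (b n - a n))) * hDsub
      rw [hdiff, abs_div, abs_of_pos (by positivity : (0:ℝ) < D ^ 2)]
      have hxa0 : 0 ≤ x - a n := by linarith
      have hxaM : x - a n ≤ M := by linarith
      have hsum0 : 0 ≤ D + (b n - a n) := by linarith [hab n]
      have hsum : D + (b n - a n) ≤ 3 * b n := by linarith
      have habsnum : |E * c * (x - a n) * (D + (b n - a n))|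
          = E * |c| * (x - a n) * (D + (b n - a n)) := by
        rw [abs_mul, abs_mul, abs_mul, abs_of_pos hE, abs_of_nonneg hxa0, abs_of_nonneg hsum0]
      rw [habsnum, div_le_iff₀ (by positivity : (0:ℝ) < D ^ 2)]
      have h1 : E * |c| * (x - a n) * (D + (b n - a n)) ≤ E * |c| * (M * (3 * b n)) := by
        have := mul_le_mul hxaM hsum hsum0 hM0.le
        nlinarith [mul_nonneg hE.le hcabs]
      have h2 : (12 * E * |c| * M) * (b n)⁻¹ * (b n / 2) ^ 2 = 3 * (E * |c| * (M * b n)) := by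
        field_simp
        ring
      have hepos : 0 ≤ (12 * E * |c| * M) * (b n)⁻¹ := by positivity
      have h3 : (12 * E * |c| * M) * (b n)⁻¹ * (b n / 2) ^ 2
          ≤ (12 * E * |c| * M) * (b n)⁻¹ * D ^ 2 := by
        apply mul_le_mul_of_nonneg_left _ hepos
        nlinarith
      calc E * |c| * (x - a n) * (D + (b n - a n))
          ≤ E * |c| * (M * (3 * b n)) := h1
        _ = 3 * (E * |c| * (M * b n)) := by ring
        _ = (12 * E * |c| * M) * (b n)⁻¹ * (b n / 2) ^ 2 := h2.symm
        _ ≤ (12 * E * |c| * M) * (b n)⁻¹ * D ^ 2 := h3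
  | (j + 2) =>
    refine squeeze_tuo (e := fun n =>
        (E * (((j+2).factorial : ℕ) : ℝ) * |c| ^ (j + 1) * 2 ^ (j + 3)) * (b n)⁻¹) ?_ ?_
    · simpa using hbinv.const_mul (E * (((j+2).factorial : ℕ) : ℝ) * |c| ^ (j + 1) * 2 ^ (j + 3))
    · filter_upwards [hevA, hevB] with n han hbn
      intro x hx
      obtain ⟨hax, hxM', hbpos, hb1, hb2M, hbcM, hDhalf, hDpos, hDub⟩ := facts n han hbn x hx
      have hDne : c * x + (b n - E * a n) ≠ 0 := ne_of_gt hDpos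
      rw [formula_eq E c _ _ _ (a n) (b n) hc hc_def rfl rfl rfl (j + 2) x hDne,
        lin_iterDeriv E j x, Real.dist_eq]
      have han0 : 0 < a n := ha_pos n
      set D := c * x + (b n - E * a n) with hD_def
      set q : ℝ := (((j+2).factorial : ℕ) : ℝ) with hq_def
      have hq0 : 0 < q := by positivity
      simp only [if_neg (Nat.succ_ne_zero (j+1)), zero_add, zero_sub, abs_neg]
      have habs : |(-(E * (b n - a n) ^ 2) / c) *
          ((-1:ℝ) ^ (j + 2) * q * c ^ (j + 2) * (D ^ (j + 2 + 1))⁻¹)|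
          = (E * (b n - a n) ^ 2 / |c|) * (q * |c| ^ (j + 2) * (D ^ (j + 3))⁻¹) := by
        have hba0 : (0:ℝ) < b n - a n := sub_pos.2 (hab n)
        simp only [abs_mul, abs_div, abs_pow, abs_inv, abs_neg, abs_one, one_pow, one_mul,
          abs_of_pos hE, abs_of_pos hba0, abs_of_pos hq0, abs_of_pos hDpos]
      rw [habs]
      have hre : E * (b n - a n) ^ 2 / |c| * (q * |c| ^ (j + 2) * (D ^ (j + 3))⁻¹)
          = E * (b n - a n) ^ 2 * q * |c| ^ (j + 1) * (D ^ (j + 3))⁻¹ := by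
        have : |c| ^ (j + 2) = |c| ^ (j + 1) * |c| := pow_succ _ _
        rw [this]
        have hcabs' : |c| ≠ 0 := abs_ne_zero.2 hc
        field_simp
      rw [hre, ← div_eq_mul_inv, div_le_iff₀ (by positivity : (0:ℝ) < D ^ (j + 3))]
      have hcp : 0 ≤ |c| ^ (j + 1) := by positivity
      have hba2 : (b n - a n) ^ 2 ≤ (b n) ^ 2 := by nlinarith
      have hb2k : (b n) ^ 2 ≤ (b n) ^ (j + 2) := pow_le_pow_right₀ hb1 (by omega)
      have step1 : E * (b n - a n) ^ 2 * q * |c| ^ (j + 1)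
          ≤ E * q * |c| ^ (j + 1) * (b n) ^ (j + 2) := by
        have h := (hba2.trans hb2k)
        have := mul_le_mul_of_nonneg_left h
          (by positivity : (0:ℝ) ≤ E * q * |c| ^ (j + 1))
        nlinarith [this]
      have step2 : (E * q * |c| ^ (j + 1) * 2 ^ (j + 3)) * (b n)⁻¹ * (b n / 2) ^ (j + 3)
          = E * q * |c| ^ (j + 1) * (b n) ^ (j + 2) := by
        rw [div_pow]
        field_simp
        ring
      have hDp : (b n / 2) ^ (j + 3) ≤ D ^ (j + 3) :=
        pow_le_pow_left₀ (by positivity) hDhalf _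
      have hepos : 0 ≤ (E * q * |c| ^ (j + 1) * 2 ^ (j + 3)) * (b n)⁻¹ := by positivity
      calc E * (b n - a n) ^ 2 * q * |c| ^ (j + 1)
          ≤ E * q * |c| ^ (j + 1) * (b n) ^ (j + 2) := step1
        _ = (E * q * |c| ^ (j + 1) * 2 ^ (j + 3)) * (b n)⁻¹ * (b n / 2) ^ (j + 3) := step2.symm
        _ ≤ (E * q * |c| ^ (j + 1) * 2 ^ (j + 3)) * (b n)⁻¹ * D ^ (j + 3) :=
            mul_le_mul_of_nonneg_left hDp hepos
end
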